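/- The chromatic number of G(V) equals 1 + q + q² + ⋯ + q^{n−1} = (qⁿ − 1)/(q − 1); in particular G(V) is weakly perfect (its chromatic number equals its clique number). -/

import Mathlib

open Module

/-- The subspace sum graph of a vector space `V` over a field `K`. -/
def subspaceSumGraph (K V : Type*) [Field K] [AddCommGroup V] [Module K V] :
    SimpleGraph {W : Submodule K V // W ≠ ⊥ ∧ W ≠ ⊤} where
  Adj W₁ W₂ := W₁ ≠ W₂ ∧ (W₁ : Submodule K V) ⊔ (W₂ : Submodule K V) = ⊤
  symm := by
    constructor
    intro a b h
    exact ⟨h.1.symm, by rw [sup_comm]; exact h.2⟩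
  loopless := by
    constructor
    intro a h
    exact h.1 rfl

/-- Two nonzero functionals with equal kernels are proportional. -/
lemma exists_smul_of_ker_eq_ker {K V : Type*} [Field K] [AddCommGroup V] [Module K V]
    [FiniteDimensional K V] {f g : Module.Dual K V} (hg : g ≠ 0)
    (h : LinearMap.ker f = LinearMap.ker g) : ∃ c : K, c ≠ 0 ∧ g = c • f := by
  have h1 : (⨅ _ : Unit, LinearMap.ker f) ≤ LinearMap.ker g := by simp [h]
  have h2 := mem_span_of_iInf_ker_le_ker (L := fun _ : Unit => f) h1
  rw [Set.range_const, Submodule.mem_span_singleton] at h2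
  obtain ⟨c, hc⟩ := h2
  exact ⟨c, fun h0 => hg (by rw [← hc, h0, zero_smul]), hc.symm⟩

theorem chromaticNumber_eq (K V : Type*) [Field K] [Fintype K] [AddCommGroup V]
    [Module K V] [FiniteDimensional K V] (n q : ℕ) (hq : Fintype.card K = q)
    (hn : 2 ≤ n) (hdim : finrank K V = n) :
    (subspaceSumGraph K V).chromaticNumber = ((∑ i ∈ Finset.range n, q ^ i : ℕ) : ℕ∞) ∧
    (subspaceSumGraph K V).chromaticNumber = (((q ^ n - 1) / (q - 1) : ℕ) : ℕ∞) ∧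
    (subspaceSumGraph K V).chromaticNumber = ((subspaceSumGraph K V).cliqueNum : ℕ∞) := by
  classical
  have hq2 : 2 ≤ q := hq ▸ Fintype.one_lt_card
  have hq1 : 1 ≤ q := le_trans (by norm_num) hq2
  have hFinV : Finite V := Module.finite_of_finite K
  letI : Fintype V := Fintype.ofFinite V
  haveI : Finite (Module.Dual K V) :=
    Finite.of_injective (fun f => (f : V → K)) DFunLike.coe_injective
  letI : Fintype (Module.Dual K V) := Fintype.ofFinite _
  haveI : Finite (Submodule K V) :=
    Finite.of_injective (fun W => (W : Set V)) SetLike.coe_injective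
  letI : Fintype {W : Submodule K V // W ≠ ⊥ ∧ W ≠ ⊤} := Fintype.ofFinite _
  set N := ∑ i ∈ Finset.range n, q ^ i with hN
  -- kernels of nonzero functionals are proper nontrivial subspaces
  have kerne : ∀ f : Module.Dual K V, f ≠ 0 →
      LinearMap.ker f ≠ ⊥ ∧ LinearMap.ker f ≠ ⊤ := by
    intro f hf
    refine ⟨fun hbot => ?_, fun htop => hf (LinearMap.ker_eq_top.mp htop)⟩
    have hinj : Function.Injective f := LinearMap.ker_eq_bot.mp hbot
    have h1 := LinearMap.finrank_le_finrank_of_injective hinj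
    rw [hdim, finrank_self] at h1
    omega
  set κ : {f : Module.Dual K V // f ≠ 0} → {W : Submodule K V // W ≠ ⊥ ∧ W ≠ ⊤} :=
    fun f => ⟨LinearMap.ker f.1, kerne f.1 f.2⟩ with hκ
  set S : Finset {W : Submodule K V // W ≠ ⊥ ∧ W ≠ ⊤} := Finset.univ.image κ with hS
  have hco : ∀ f : Module.Dual K V, f ≠ 0 → IsCoatom (LinearMap.ker f) := fun f hf =>
    LinearMap.isCoatom_ker_of_surjective (LinearMap.surjective_of_ne_zero hf)
  -- S is a clique
  have hclique : (subspaceSumGraph K V).IsClique (S : Set _) := by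
    intro a ha b hb hab
    simp only [hS, Finset.coe_image, Set.mem_image] at ha hb
    obtain ⟨f, -, rfl⟩ := ha
    obtain ⟨g, -, rfl⟩ := hb
    refine ⟨hab, ?_⟩
    have hcf := hco f.1 f.2
    have hcg := hco g.1 g.2
    by_contra hne
    have hlt : (κ f).1 < (κ f).1 ⊔ (κ g).1 := by
      rcases lt_or_eq_of_le (le_sup_left :
        (κ f).1 ≤ (κ f).1 ⊔ (κ g).1) with h | h
      · exact h
      · exfalso
        have hgle : (κ g).1 ≤ (κ f).1 := by
          rw [← h.symm] at *
          exact le_sup_right.trans h.symm.le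
        rcases lt_or_eq_of_le hgle with h2 | h2
        · exact hcf.1 (hcg.2 _ h2)
        · exact hab (Subtype.ext h2.symm) |>.elim
    exact hne (hcf.2 _ hlt)
  -- fibers of κ have cardinality q - 1
  have hfiber : ∀ f : {f : Module.Dual K V // f ≠ 0},
      (Finset.univ.filter (fun a => κ a = κ f)).card = q - 1 := by
    intro f
    have himg : Finset.univ.filter (fun a => κ a = κ f) =
        Finset.univ.image (fun c : Kˣ =>
          (⟨(c : K) • f.1, smul_ne_zero c.ne_zero f.2⟩ : {f : Module.Dual K V // f ≠ 0})) := by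
      ext g
      simp only [Finset.mem_filter, Finset.mem_univ, true_and, Finset.mem_image, hκ]
      constructor
      · intro h
        have hker : LinearMap.ker f.1 = LinearMap.ker g.1 :=
          (congrArg Subtype.val h).symm
        obtain ⟨c, hc0, hc⟩ := exists_smul_of_ker_eq_ker g.2 hker
        exact ⟨Units.mk0 c hc0, Subtype.ext hc.symm⟩
      · rintro ⟨c, rfl⟩
        exact Subtype.ext (LinearMap.ker_smul f.1 (c : K) c.ne_zero)
    rw [himg, Finset.card_image_of_injective _ ?_, Finset.card_univ, Fintype.card_units, hq]
    intro c c' hcc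
    have h1 : (c : K) • f.1 = (c' : K) • f.1 := congrArg Subtype.val hcc
    obtain ⟨x, hx⟩ : ∃ x, f.1 x ≠ 0 := by
      by_contra hall
      push_neg at hall
      exact f.2 (LinearMap.ext fun x => by simp [hall x])
    have := congrFun (congrArg (fun φ : Module.Dual K V => (φ : V → K)) h1) x
    simp only [LinearMap.smul_apply, smul_eq_mul] at this
    exact Units.ext (mul_right_cancel₀ hx this)
  -- card of nonzero functionals
  have hcardD : Fintype.card (Module.Dual K V) = q ^ n := by
    rw [card_eq_pow_finrank (K := K), Subspace.dual_finrank_eq, hdim, hq]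
  have hcardNZ : Fintype.card {f : Module.Dual K V // f ≠ 0} = q ^ n - 1 := by
    rw [← hcardD]
    simp [Fintype.card_subtype_compl, Fintype.card_subtype_eq (0 : Module.Dual K V)]
  -- counting: S.card * (q-1) = q^n - 1
  have hcount : S.card * (q - 1) = q ^ n - 1 := by
    have h1 := Finset.card_eq_sum_card_image κ Finset.univ
    rw [Finset.card_univ, hcardNZ] at h1
    rw [hS]
    rw [h1, Finset.sum_congr rfl (fun b hb => ?_), Finset.sum_const, smul_eq_mul]
    obtain ⟨f, -, rfl⟩ := Finset.mem_image.mp hb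
    exact hfiber f
  -- geometric sum identity
  have hgeom : N * (q - 1) = q ^ n - 1 := by
    have h1 : ((N * (q - 1) : ℕ) : ℤ) = ((q ^ n - 1 : ℕ) : ℤ) := by
      rw [Nat.cast_mul, Nat.cast_sub hq1, Nat.cast_sub (Nat.one_le_pow _ _ (by omega))]
      push_cast [hN]
      exact geom_sum_mul (q : ℤ) n
    exact Nat.cast_injective h1
  have hScard : S.card = N :=
    Nat.eq_of_mul_eq_mul_right (by omega) (hcount.trans hgeom.symm)
  -- coloring
  have hcol : ∀ W : {W : Submodule K V // W ≠ ⊥ ∧ W ≠ ⊤},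
      ∃ b, b ∈ S ∧ W.1 ≤ b.1 := by
    intro W
    obtain ⟨f, hf0, hle⟩ := W.1.exists_le_ker_of_lt_top (lt_top_iff_ne_top.mpr W.2.2)
    exact ⟨κ ⟨f, hf0⟩, Finset.mem_image_of_mem _ (Finset.mem_univ _), hle⟩
  choose cf hmem hle using hcol
  let C : (subspaceSumGraph K V).Coloring {b // b ∈ S} :=
    SimpleGraph.Coloring.mk (fun W => ⟨cf W, hmem W⟩) (by
      intro W₁ W₂ hadj heq
      have h1 : cf W₁ = cf W₂ := congrArg Subtype.val heq
      have h2 : W₁.1 ⊔ W₂.1 ≤ (cf W₁).1 := sup_le (hle W₁) (h1 ▸ hle W₂)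
      rw [hadj.2, top_le_iff] at h2
      exact (cf W₁).2.2 h2)
  have hcolorable : (subspaceSumGraph K V).Colorable N := by
    have := C.colorable
    rwa [Fintype.card_coe, hScard] at this
  -- chromatic number = N
  have hchrom : (subspaceSumGraph K V).chromaticNumber = (N : ℕ∞) := by
    refine le_antisymm hcolorable.chromaticNumber_le ?_
    have := hclique.card_le_chromaticNumber
    rwa [hScard] at this
  -- clique number = N
  have hcliqueNum : (subspaceSumGraph K V).cliqueNum = N := by
    refine le_antisymm ?_ ?_
    · obtain ⟨t, ht⟩ := (subspaceSumGraph K V).exists_isNClique_cliqueNum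
      have := ht.isClique.card_le_of_colorable hcolorable
      rwa [ht.card_eq] at this
    · have := @SimpleGraph.IsClique.card_le_cliqueNum _ (subspaceSumGraph K V) _ S hclique
      rwa [hScard] at this
  refine ⟨hchrom, ?_, by rw [hchrom, hcliqueNum]⟩
  rw [hchrom]
  congr 1
  exact (Nat.div_eq_of_eq_mul_left (by omega) hgeom.symm).symm
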